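/- Let {τ_n}_{n≥1} be the unique normalized Markov trace on the Iwahori–Hecke algebras {H_n}_{n≥1}, with τ_0 := id. For any n ≥ 1, any d-composition μ of n and any x_1⊗⋯⊗x_d ∈ H^μ (viewed inside H_n), one has τ_n(x_1⊗⋯⊗x_d) = (v^{−1}(1−u^2))^{|[μ]|−1}·τ_{μ_1}(x_1)⋯τ_{μ_d}(x_d), where |[μ]| is the number of non-zero parts of μ. -/

import Mathlib

noncomputable section

open scoped TensorProduct
open Finset CategoryTheory

namespace YH

/-! ### Ground rings:
`RR = ℂ[u^{±1}, v]`, `LL = ℂ[u^{±1}, v^{±1}]`, `GG = ℂ[u^{±1}, v^{±1}, γ^{±1}]`. -/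

abbrev RR : Type := AddMonoidAlgebra ℂ (ℤ × ℕ)
abbrev LL : Type := AddMonoidAlgebra ℂ (ℤ × ℤ)
abbrev GG : Type := AddMonoidAlgebra ℂ (ℤ × ℤ × ℤ)

def uR : RR := AddMonoidAlgebra.of' ℂ (ℤ × ℕ) (1, 0)
def uRi : RR := AddMonoidAlgebra.of' ℂ (ℤ × ℕ) (-1, 0)
def vR : RR := AddMonoidAlgebra.of' ℂ (ℤ × ℕ) (0, 1)

def uL : LL := AddMonoidAlgebra.of' ℂ (ℤ × ℤ) (1, 0)
def uLi : LL := AddMonoidAlgebra.of' ℂ (ℤ × ℤ) (-1, 0)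
def vL : LL := AddMonoidAlgebra.of' ℂ (ℤ × ℤ) (0, 1)
def vLi : LL := AddMonoidAlgebra.of' ℂ (ℤ × ℤ) (0, -1)

def uG : GG := AddMonoidAlgebra.of' ℂ (ℤ × ℤ × ℤ) (1, 0, 0)
def uGi : GG := AddMonoidAlgebra.of' ℂ (ℤ × ℤ × ℤ) (-1, 0, 0)
def vG : GG := AddMonoidAlgebra.of' ℂ (ℤ × ℤ × ℤ) (0, 1, 0)
def vGi : GG := AddMonoidAlgebra.of' ℂ (ℤ × ℤ × ℤ) (0, -1, 0)
def gG : GG := AddMonoidAlgebra.of' ℂ (ℤ × ℤ × ℤ) (0, 0, 1)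
def gGi : GG := AddMonoidAlgebra.of' ℂ (ℤ × ℤ × ℤ) (0, 0, -1)

/-- The canonical embedding `ℂ[u^{±1},v^{±1}] → ℂ[u^{±1},v^{±1},γ^{±1}]`. -/
def embLG : LL →+* GG :=
  AddMonoidAlgebra.mapDomainRingHom ℂ
    ((AddMonoidHom.id ℤ).prodMap (AddMonoidHom.inl ℤ ℤ))

/-! ### Symmetric group combinatorics -/

/-- The simple transposition `s_i = (i, i+1)` (0-based), or `1` if out of range. -/
def sw {n : ℕ} (i : ℕ) : Equiv.Perm (Fin n) :=
  if h : i + 1 < n then Equiv.swap ⟨i, Nat.lt_of_succ_lt h⟩ ⟨i + 1, h⟩ else 1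

/-- The Coxeter length of a permutation = its number of inversions. -/
def pLen {n : ℕ} (w : Equiv.Perm (Fin n)) : ℕ :=
  ((Finset.univ : Finset (Fin n × Fin n)).filter
    (fun p => p.1 < p.2 ∧ w p.2 < w p.1)).card

def isDescent {n : ℕ} (w : Equiv.Perm (Fin n)) (i : ℕ) : Bool :=
  if h : i + 1 < n then decide (w ⟨i + 1, h⟩ < w ⟨i, Nat.lt_of_succ_lt h⟩) else false

def wordAux {n : ℕ} : ℕ → Equiv.Perm (Fin n) → List ℕ
  | 0, _ => []
  | fuel + 1, w =>
    match (List.range n).find? (fun i => isDescent w i) with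
    | none => []
    | some i => wordAux fuel (w * sw i) ++ [i]

/-- A canonical reduced word for a permutation. -/
def redWord {n : ℕ} (w : Equiv.Perm (Fin n)) : List ℕ := wordAux (n * n) w

/-- The natural extension of a permutation of `Fin n` to `Fin (n+1)` (fixing the last point). -/
def extPerm {n : ℕ} (w : Equiv.Perm (Fin n)) : Equiv.Perm (Fin (n + 1)) :=
  (Equiv.permCongr (finSuccEquivLast (n := n))).symm (Equiv.optionCongr w)

/-- The cycle `(p, p+1, …, n)` (0-based) in `S_{n+1}`, mapping `x ↦ x+1` for `p ≤ x < n`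
and `n ↦ p`. -/
def shiftCycle (n p : ℕ) : Equiv.Perm (Fin (n + 1)) :=
  ((List.range' p (n - p)).map (fun i => sw (n := n + 1) i)).prod

/-! ### The Iwahori–Hecke algebra of type A (presented over any commutative ring) -/

inductive HRel (A : Type) [CommRing A] (u v : A) (n : ℕ) :
    FreeAlgebra A ℕ → FreeAlgebra A ℕ → Prop
  | comm (i j : ℕ) (hij : i + 1 < j) (hj : j + 1 < n) :
      HRel A u v n (FreeAlgebra.ι A i * FreeAlgebra.ι A j)
        (FreeAlgebra.ι A j * FreeAlgebra.ι A i)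
  | braid (i : ℕ) (h : i + 2 < n) :
      HRel A u v n
        (FreeAlgebra.ι A i * FreeAlgebra.ι A (i + 1) * FreeAlgebra.ι A i)
        (FreeAlgebra.ι A (i + 1) * FreeAlgebra.ι A i * FreeAlgebra.ι A (i + 1))
  | quad (i : ℕ) (h : i + 1 < n) :
      HRel A u v n (FreeAlgebra.ι A i * FreeAlgebra.ι A i)
        (algebraMap A (FreeAlgebra A ℕ) (u ^ 2) +
          algebraMap A (FreeAlgebra A ℕ) v * FreeAlgebra.ι A i)
  | kill (i : ℕ) (h : ¬ i + 1 < n) : HRel A u v n (FreeAlgebra.ι A i) 0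

/-- The Iwahori–Hecke algebra `H_n` with generators `T_0, …, T_{n-2}` (0-based indexing
of the `n-1` generators `T_1, …, T_{n-1}` of the paper). -/
abbrev Hecke (A : Type) [CommRing A] (u v : A) (n : ℕ) : Type := RingQuot (HRel A u v n)

/-- The generator `T_i` of the Iwahori–Hecke algebra. -/
def HT (A : Type) [CommRing A] (u v : A) (n i : ℕ) : Hecke A u v n :=
  RingQuot.mkAlgHom A (HRel A u v n) (FreeAlgebra.ι A i)

/-- `T_w` for a permutation `w`, via a (canonical) reduced word. -/
def HTw (A : Type) [CommRing A] (u v : A) (n : ℕ) (w : Equiv.Perm (Fin n)) :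
    Hecke A u v n :=
  ((redWord w).map (fun i => HT A u v n i)).prod

/-- `T̃_w = u^{-ℓ(w)} T_w`; here `ui` is the inverse of `u`. -/
def HTt (A : Type) [CommRing A] (u v ui : A) (n : ℕ) (w : Equiv.Perm (Fin n)) :
    Hecke A u v n :=
  algebraMap A (Hecke A u v n) (ui ^ pLen w) * HTw A u v n w

/-- `f : H_m → H_n` is the block embedding at offset `off` if it sends `T_i` to `T_{off+i}`. -/
def IsBlockEmb (A : Type) [CommRing A] (u v : A) (m n off : ℕ)
    (f : Hecke A u v m →ₐ[A] Hecke A u v n) : Prop :=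
  ∀ i, i + 1 < m → f (HT A u v m i) = HT A u v n (off + i)

/-! ### Compositions -/

/-- The set of `d`-compositions of `n`. -/
def compD (d n : ℕ) : Finset (Fin d → ℕ) := Finset.Nat.antidiagonalTuple d n

/-- `μ_1 + ⋯ + μ_a` (sum of the parts with index `≤ a`). -/
def psumLe {d : ℕ} (μ : Fin d → ℕ) (a : Fin d) : ℕ :=
  ∑ b ∈ Finset.univ.filter (fun b : Fin d => b ≤ a), μ b

/-- `μ_1 + ⋯ + μ_{a-1}` (sum of the parts with index `< a`). -/
def psumLt {d : ℕ} (μ : Fin d → ℕ) (a : Fin d) : ℕ :=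
  ∑ b ∈ Finset.univ.filter (fun b : Fin d => b < a), μ b

/-- `μ^{[a]}` : add 1 to the `a`-th part. -/
def bump {d : ℕ} (μ : Fin d → ℕ) (a : Fin d) : Fin d → ℕ :=
  fun b => if b = a then μ b + 1 else μ b

/-- The base `[μ]` of a composition. -/
def base {d : ℕ} (μ : Fin d → ℕ) : Fin d → ℕ := fun a => if μ a = 0 then 0 else 1

/-- `Comp_d^0` : the set of nonzero `d`-compositions with all parts in `{0,1}`. -/
def comp0F (d : ℕ) : Finset (Fin d → ℕ) :=
  ((Finset.univ : Finset (Fin d → Bool)).image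
    (fun f a => if f a then 1 else 0)).filter (fun μ => μ ≠ fun _ => 0)

/-- The index set `I_μ` (0-based) of the generators of the Young subgroup/parabolic. -/
def Imu {d : ℕ} (μ : Fin d → ℕ) (n : ℕ) : Set ℕ :=
  {i | i + 1 < n ∧ ∀ a : Fin d, i + 1 ≠ psumLe μ a}

/-- The parabolic subalgebra `H^μ ⊆ H_n`. -/
def heckeSub (A : Type) [CommRing A] (u v : A) {d : ℕ} (μ : Fin d → ℕ) (n : ℕ) :
    Subalgebra A (Hecke A u v n) :=
  Algebra.adjoin A {x | ∃ i ∈ Imu μ n, x = HT A u v n i}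

/-! ### The Yokonuma–Hecke algebra -/

abbrev YGen : Type := ℕ ⊕ ℕ

def Fg (A : Type) [CommRing A] (i : ℕ) : FreeAlgebra A YGen :=
  FreeAlgebra.ι A (Sum.inl i)

def Ft (A : Type) [CommRing A] (j : ℕ) : FreeAlgebra A YGen :=
  FreeAlgebra.ι A (Sum.inr j)

/-- The element `e_i = (1/d) ∑_{0 ≤ s ≤ d-1} t_i^s t_{i+1}^{-s}` of the free algebra
(`t^{-s} = t^{(d-s) mod d}` since `t^d = 1`). -/
def Fe (A : Type) [CommRing A] [Algebra ℂ A] (d i : ℕ) : FreeAlgebra A YGen :=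
  algebraMap A (FreeAlgebra A YGen) (algebraMap ℂ A (d : ℂ)⁻¹) *
    ∑ s ∈ Finset.range d, Ft A i ^ s * Ft A (i + 1) ^ ((d - s) % d)

/-- `s_i(j)` on indices. -/
def swapN (i j k : ℕ) : ℕ := if k = i then j else if k = j then i else k

inductive YRel (A : Type) [CommRing A] [Algebra ℂ A] (u v : A) (d n : ℕ) :
    FreeAlgebra A YGen → FreeAlgebra A YGen → Prop
  | gcomm (i j : ℕ) (hij : i + 1 < j) (hj : j + 1 < n) :
      YRel A u v d n (Fg A i * Fg A j) (Fg A j * Fg A i)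
  | gbraid (i : ℕ) (h : i + 2 < n) :
      YRel A u v d n (Fg A i * Fg A (i + 1) * Fg A i)
        (Fg A (i + 1) * Fg A i * Fg A (i + 1))
  | tcomm (i j : ℕ) (hi : i < n) (hj : j < n) :
      YRel A u v d n (Ft A i * Ft A j) (Ft A j * Ft A i)
  | gtrel (i j : ℕ) (hi : i + 1 < n) (hj : j < n) :
      YRel A u v d n (Fg A i * Ft A j) (Ft A (swapN i (i + 1) j) * Fg A i)
  | tord (j : ℕ) (hj : j < n) : YRel A u v d n (Ft A j ^ d) 1
  | quad (i : ℕ) (h : i + 1 < n) :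
      YRel A u v d n (Fg A i * Fg A i)
        (algebraMap A (FreeAlgebra A YGen) (u ^ 2) +
          algebraMap A (FreeAlgebra A YGen) v * (Fe A d i * Fg A i))
  | gkill (i : ℕ) (h : ¬ i + 1 < n) : YRel A u v d n (Fg A i) 0
  | tkill (j : ℕ) (h : ¬ j < n) : YRel A u v d n (Ft A j) 1

/-- The Yokonuma–Hecke algebra `Y_{d,n}`, with generators `g_0, …, g_{n-2}` and
`t_0, …, t_{n-1}` (0-based reindexing of the paper's generators). -/
abbrev Yok (A : Type) [CommRing A] [Algebra ℂ A] (u v : A) (d n : ℕ) : Type :=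
  RingQuot (YRel A u v d n)

def yg (A : Type) [CommRing A] [Algebra ℂ A] (u v : A) (d n i : ℕ) : Yok A u v d n :=
  RingQuot.mkAlgHom A (YRel A u v d n) (Fg A i)

def yt (A : Type) [CommRing A] [Algebra ℂ A] (u v : A) (d n j : ℕ) : Yok A u v d n :=
  RingQuot.mkAlgHom A (YRel A u v d n) (Ft A j)

def ye (A : Type) [CommRing A] [Algebra ℂ A] (u v : A) (d n i : ℕ) : Yok A u v d n :=
  RingQuot.mkAlgHom A (YRel A u v d n) (Fe A d i)

/-- `g_w` via a canonical reduced word. -/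
def ygw (A : Type) [CommRing A] [Algebra ℂ A] (u v : A) (d n : ℕ)
    (w : Equiv.Perm (Fin n)) : Yok A u v d n :=
  ((redWord w).map (fun i => yg A u v d n i)).prod

/-- `g̃_w = u^{-ℓ(w)} g_w`; here `ui` is the inverse of `u`. -/
def ygt (A : Type) [CommRing A] [Algebra ℂ A] (u v ui : A) (d n : ℕ)
    (w : Equiv.Perm (Fin n)) : Yok A u v d n :=
  algebraMap A (Yok A u v d n) (ui ^ pLen w) * ygw A u v d n w

/-! ### Characters of `(ℤ/dℤ)^n` and idempotents -/

/-- A character of `(ℤ/dℤ)^n`, recorded by the exponents `k_j` with `χ(t_j) = ξ^{k_j}`. -/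
abbrev Char (d n : ℕ) : Type := Fin n → ZMod d

/-- A primitive `d`-th root of unity. -/
def xi (d : ℕ) : ℂ := Complex.exp (2 * Real.pi * Complex.I / d)

/-- The action of `S_n` on characters : `w(χ)(t_j) = χ(t_{w^{-1}(j)})`. -/
def permAct {d n : ℕ} (w : Equiv.Perm (Fin n)) (χ : Char d n) : Char d n :=
  fun j => χ (w⁻¹ j)

/-- `Comp(χ)`, the composition of `n` counting how many `t_j` take each character value. -/
def compOf {d n : ℕ} [NeZero d] (χ : Char d n) : Fin d → ℕ :=
  fun a => (Finset.univ.filter (fun j : Fin n => χ j = ((a : ℕ) : ZMod d))).card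

/-- The block of position `j` in the composition `μ`. -/
def blockOf {d : ℕ} (μ : Fin d → ℕ) (j : ℕ) : ZMod d :=
  (((Finset.univ.filter (fun a : Fin d => psumLe μ a ≤ j)).card : ℕ) : ZMod d)

/-- The distinguished character `χ_1^μ` of the orbit attached to `μ`. -/
def chiOne {d : ℕ} (μ : Fin d → ℕ) (n : ℕ) : Char d n := fun j => blockOf μ (j : ℕ)

/-- Extension of a character of `(ℤ/d)^n` to `(ℤ/d)^{n+1}` with last value `ξ_a`. -/
def extChar {d n : ℕ} (χ : Char d n) (a : Fin d) : Char d (n + 1) :=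
  fun j => if h : (j : ℕ) < n then χ ⟨j, h⟩ else ((a : ℕ) : ZMod d)

/-- Membership in the Young subgroup `S^μ` = stabiliser of `χ_1^μ`. -/
def IsYoung {d : ℕ} (μ : Fin d → ℕ) (n : ℕ) (w : Equiv.Perm (Fin n)) : Prop :=
  permAct w (chiOne μ n) = chiOne μ n

/-- The distinguished (minimal length) coset representative `π_χ` with
`π_χ(χ_1^μ) = χ`. -/
def piRep {d n : ℕ} (μ : Fin d → ℕ) (χ : Char d n) : Equiv.Perm (Fin n) :=
  if h : (Finset.univ.filter
      (fun w : Equiv.Perm (Fin n) => permAct w (chiOne μ n) = χ)).Nonempty then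
    (Finset.exists_min_image _ pLen h).choose
  else 1

/-- The primitive idempotent `E_χ` of `Y_{d,n}`. -/
def Echar (A : Type) [CommRing A] [Algebra ℂ A] (u v : A) (d n : ℕ) (χ : Char d n) :
    Yok A u v d n :=
  (((List.finRange n).map (fun j =>
    algebraMap A (Yok A u v d n) (algebraMap ℂ A (d : ℂ)⁻¹) *
      ∑ s ∈ Finset.range d,
        algebraMap A (Yok A u v d n) (algebraMap ℂ A (xi d ^ ((χ j).val * s))) *
          yt A u v d n j ^ ((d - s) % d))).prod)

/-- The central idempotent `E_μ`. -/
def Emu (A : Type) [CommRing A] [Algebra ℂ A] (u v : A) (d n : ℕ) [NeZero d]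
    (μ : Fin d → ℕ) : Yok A u v d n :=
  ∑ χ ∈ Finset.univ.filter (fun χ : Char d n => compOf χ = μ), Echar A u v d n χ

/-- The orbit `O(μ)`, as an index type of the matrix algebra. -/
abbrev OType (d n : ℕ) [NeZero d] (μ : Fin d → ℕ) : Type :=
  {χ : Char d n // compOf χ = μ}

/-- The defining property of the map `Ψ_μ : Y_{d,n} → Mat(H^μ)` (extended by `0` outside
`E_μ Y_{d,n}`, and with matrices indexed by all characters, supported on the orbit of `μ`). -/
def IsPsi (A : Type) [CommRing A] [Algebra ℂ A] (u v ui : A) (d n : ℕ) [NeZero d]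
    (μ : Fin d → ℕ)
    (Ψ : Yok A u v d n →ₗ[A] Matrix (Char d n) (Char d n) (Hecke A u v n)) : Prop :=
  ∀ (χ : Char d n) (w : Equiv.Perm (Fin n)),
    Ψ (Echar A u v d n χ * ygt A u v ui d n w) =
      if compOf χ = μ then
        Matrix.single χ (permAct w⁻¹ χ)
          (HTt A u v ui n ((piRep μ χ)⁻¹ * w * piRep μ (permAct w⁻¹ χ)))
      else 0

/-! ### Markov traces -/

/-- Markov trace conditions (M1)-(M2) for a family of linear forms on the Iwahori–Hecke
algebras. Natural embeddings `H_n ⊆ H_{n+1}` are quantified through their values on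
generators. -/
def IsMarkovH (A : Type) [CommRing A] (u v : A)
    (τ : ∀ m, Hecke A u v m →ₗ[A] A) : Prop :=
  (∀ m, ∀ x y : Hecke A u v m, τ m (x * y) = τ m (y * x)) ∧
  (∀ n, ∀ f : Hecke A u v (n + 1) →ₐ[A] Hecke A u v (n + 2),
    (∀ i, i + 1 < n + 1 → f (HT A u v (n + 1) i) = HT A u v (n + 2) i) →
    ∀ x : Hecke A u v (n + 1),
      τ (n + 2) (f x * HT A u v (n + 2) n) = τ (n + 1) x ∧
      τ (n + 2) (f x * Ring.inverse (HT A u v (n + 2) n)) = τ (n + 1) x)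

/-- The unique normalised Markov trace, with the convention `τ_0 = id`. -/
def IsNormMarkovH (A : Type) [CommRing A] (u v : A)
    (τ : ∀ m, Hecke A u v m →ₗ[A] A) : Prop :=
  IsMarkovH A u v τ ∧ τ 1 1 = 1 ∧
    ∀ c : A, τ 0 (algebraMap A (Hecke A u v 0) c) = c

/-- The Markov condition (M2) for a family of linear forms on the Yokonuma–Hecke algebras. -/
def MarkovCondY (A : Type) [CommRing A] [Algebra ℂ A] (u v : A) (d : ℕ)
    (ρ : ∀ m, Yok A u v d m →ₗ[A] A) : Prop :=
  ∀ n, ∀ f : Yok A u v d (n + 1) →ₐ[A] Yok A u v d (n + 2),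
    ((∀ i, i + 1 < n + 1 → f (yg A u v d (n + 1) i) = yg A u v d (n + 2) i) ∧
     (∀ j, j < n + 1 → f (yt A u v d (n + 1) j) = yt A u v d (n + 2) j)) →
    ∀ x : Yok A u v d (n + 1),
      ρ (n + 2) (f x * yg A u v d (n + 2) n) = ρ (n + 1) x ∧
      ρ (n + 2) (f x * Ring.inverse (yg A u v d (n + 2) n)) = ρ (n + 1) x

/-- A Markov trace on the family of Yokonuma–Hecke algebras. -/
def IsMarkovY (A : Type) [CommRing A] [Algebra ℂ A] (u v : A) (d : ℕ)
    (ρ : ∀ m, Yok A u v d m →ₗ[A] A) : Prop :=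
  (∀ m, ∀ x y : Yok A u v d m, ρ m (x * y) = ρ m (y * x)) ∧ MarkovCondY A u v d ρ

/-- `θ` is the linear form `τ_{μ_1} ⊗ ⋯ ⊗ τ_{μ_d}` on `H^μ ⊆ H_n`. -/
def IsTensorTau (A : Type) [CommRing A] (u v : A)
    (τ : ∀ m, Hecke A u v m →ₗ[A] A) {d : ℕ} (μ : Fin d → ℕ) (n : ℕ)
    (θ : Hecke A u v n →ₗ[A] A) : Prop :=
  ∀ (x : ∀ a : Fin d, Hecke A u v (μ a))
    (f : ∀ a : Fin d, Hecke A u v (μ a) →ₐ[A] Hecke A u v n),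
    (∀ a, IsBlockEmb A u v (μ a) n (psumLt μ a) (f a)) →
    θ (((List.finRange d).map (fun a => f a (x a))).prod) =
      (((List.finRange d).map (fun a => τ (μ a) (x a))).prod)

/-! ### Framed and classical braid groups -/

def bs (i : ℕ) : FreeGroup (ℕ ⊕ ℕ) := FreeGroup.of (Sum.inl i)
def btf (j : ℕ) : FreeGroup (ℕ ⊕ ℕ) := FreeGroup.of (Sum.inr j)

inductive FBRel (d n : ℕ) : FreeGroup (ℕ ⊕ ℕ) → Prop
  | scomm (i j : ℕ) (hij : i + 1 < j) (hj : j + 1 < n) :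
      FBRel d n (bs i * bs j * (bs j * bs i)⁻¹)
  | sbraid (i : ℕ) (h : i + 2 < n) :
      FBRel d n (bs i * bs (i + 1) * bs i * (bs (i + 1) * bs i * bs (i + 1))⁻¹)
  | tcomm (i j : ℕ) (hi : i < n) (hj : j < n) :
      FBRel d n (btf i * btf j * (btf j * btf i)⁻¹)
  | strel (i j : ℕ) (hi : i + 1 < n) (hj : j < n) :
      FBRel d n (bs i * btf j * (btf (swapN i (i + 1) j) * bs i)⁻¹)
  | tord (j : ℕ) (hj : j < n) : FBRel d n (btf j ^ d)
  | skill (i : ℕ) (h : ¬ i + 1 < n) : FBRel d n (bs i)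
  | tkill (j : ℕ) (h : ¬ j < n) : FBRel d n (btf j)

/-- The `ℤ/dℤ`-framed braid group on `n` strands. -/
abbrev FB (d n : ℕ) : Type := PresentedGroup {w | FBRel d n w}

def fbs (d n : ℕ) (i : ℕ) : FB d n := PresentedGroup.of (Sum.inl i)
def fbt (d n : ℕ) (j : ℕ) : FB d n := PresentedGroup.of (Sum.inr j)

inductive CBRel (n : ℕ) : FreeGroup ℕ → Prop
  | comm (i j : ℕ) (hij : i + 1 < j) (hj : j + 1 < n) :
      CBRel n (FreeGroup.of i * FreeGroup.of j * (FreeGroup.of j * FreeGroup.of i)⁻¹)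
  | braid (i : ℕ) (h : i + 2 < n) :
      CBRel n (FreeGroup.of i * FreeGroup.of (i + 1) * FreeGroup.of i *
        (FreeGroup.of (i + 1) * FreeGroup.of i * FreeGroup.of (i + 1))⁻¹)
  | kill (i : ℕ) (h : ¬ i + 1 < n) : CBRel n (FreeGroup.of i)

/-- The classical braid group on `n` strands. -/
abbrev CB (n : ℕ) : Type := PresentedGroup {w | CBRel n w}

def cbs (n : ℕ) (i : ℕ) : CB n := PresentedGroup.of i

/-- The natural inclusion `FB(d,n) → FB(d,n+1)` (characterised on generators). -/
def InclFB (d n : ℕ) (J : FB d n →* FB d (n + 1)) : Prop :=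
  (∀ i, i + 1 < n → J (fbs d n i) = fbs d (n + 1) i) ∧
  (∀ j, j < n → J (fbt d n j) = fbt d (n + 1) j)

/-- Markov equivalence of framed braids (= isotopy of the closures, by the framed
Markov theorem): the equivalence generated by conjugation and stabilisation. -/
inductive MarkovEqF (d : ℕ) (J : ∀ n, FB d n →* FB d (n + 1)) :
    (Σ n, FB d n) → (Σ n, FB d n) → Prop
  | refl (x) : MarkovEqF d J x x
  | symm {x y} : MarkovEqF d J x y → MarkovEqF d J y x
  | trans {x y z} : MarkovEqF d J x y → MarkovEqF d J y z → MarkovEqF d J x z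
  | conj (n : ℕ) (α β : FB d n) : MarkovEqF d J ⟨n, α * β⟩ ⟨n, β * α⟩
  | stabPos (n : ℕ) (α : FB d (n + 1)) :
      MarkovEqF d J ⟨n + 2, J (n + 1) α * fbs d (n + 2) n⟩ ⟨n + 1, α⟩
  | stabNeg (n : ℕ) (α : FB d (n + 1)) :
      MarkovEqF d J ⟨n + 2, J (n + 1) α * (fbs d (n + 2) n)⁻¹⟩ ⟨n + 1, α⟩

/-- The defining property of the homomorphism `δ^γ : A[ℤ/dℤ ≀ B_n] → A Y_{d,n}`:
`σ_i ↦ (γ + (1-γ)e_i) g_i` and `t_j ↦ t_j`. -/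
def IsDeltaY (A : Type) [CommRing A] [Algebra ℂ A] (u v γ : A) (d n : ℕ)
    (h : MonoidAlgebra A (FB d n) →ₐ[A] Yok A u v d n) : Prop :=
  (∀ i, i + 1 < n →
    h (MonoidAlgebra.of A (FB d n) (fbs d n i)) =
      (algebraMap A (Yok A u v d n) γ +
        algebraMap A (Yok A u v d n) (1 - γ) * ye A u v d n i) * yg A u v d n i) ∧
  (∀ j, j < n → h (MonoidAlgebra.of A (FB d n) (fbt d n j)) = yt A u v d n j)

/-- `ch` is the base-change ring homomorphism `LL Y_{d,n} → GG Y_{d,n}` along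
`ℂ[u^{±1},v^{±1}] ⊆ ℂ[u^{±1},v^{±1},γ^{±1}]`. -/
def IsBaseChange (d n : ℕ) (ch : Yok LL uL vL d n →+* Yok GG uG vG d n) : Prop :=
  (∀ i, ch (yg LL uL vL d n i) = yg GG uG vG d n i) ∧
  (∀ j, ch (yt LL uL vL d n j) = yt GG uG vG d n j) ∧
  (∀ c : LL, ch (algebraMap LL (Yok LL uL vL d n) c) =
    algebraMap GG (Yok GG uG vG d n) (embLG c))

/-! ### Miscellaneous algebra notions -/

/-- Morita equivalence of two rings. -/
def MoritaEq (B C : Type) [Ring B] [Ring C] : Prop :=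
  Nonempty (ModuleCat.{0} B ≌ ModuleCat.{0} C)

/-- A `k`-algebra is split semisimple if it is isomorphic to a finite direct sum of
matrix algebras over `k`. -/
def IsSplitSS (k : Type) [Field k] (B : Type) [Ring B] [Algebra k B] : Prop :=
  ∃ (r : ℕ) (m : Fin r → ℕ),
    Nonempty (B ≃ₐ[k] ∀ i : Fin r, Matrix (Fin (m i)) (Fin (m i)) k)

/-- Primitive idempotent of a ring. -/
def IsPrimIdem (B : Type) [Ring B] (e : B) : Prop :=
  IsIdempotentElem e ∧ e ≠ 0 ∧
    ∀ f g : B, IsIdempotentElem f → IsIdempotentElem g → f * g = 0 → g * f = 0 →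
      e = f + g → f = 0 ∨ g = 0

/-! ### The Ariki–Koike algebra -/

inductive AKRel (A : Type) [CommRing A] (Q : ℕ → A) (d : ℕ) (x xinv : A) (n : ℕ) :
    FreeAlgebra A ℕ → FreeAlgebra A ℕ → Prop
  | braid (i : ℕ) (h1 : 1 ≤ i) (h : i + 1 < n) :
      AKRel A Q d x xinv n
        (FreeAlgebra.ι A i * FreeAlgebra.ι A (i + 1) * FreeAlgebra.ι A i)
        (FreeAlgebra.ι A (i + 1) * FreeAlgebra.ι A i * FreeAlgebra.ι A (i + 1))
  | braid0 (h : 1 < n) :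
      AKRel A Q d x xinv n
        (FreeAlgebra.ι A 0 * FreeAlgebra.ι A 1 * FreeAlgebra.ι A 0 * FreeAlgebra.ι A 1)
        (FreeAlgebra.ι A 1 * FreeAlgebra.ι A 0 * FreeAlgebra.ι A 1 * FreeAlgebra.ι A 0)
  | comm (i j : ℕ) (hij : i + 1 < j) (hj : j < n) :
      AKRel A Q d x xinv n (FreeAlgebra.ι A i * FreeAlgebra.ι A j)
        (FreeAlgebra.ι A j * FreeAlgebra.ι A i)
  | quad (i : ℕ) (h1 : 1 ≤ i) (h : i < n) :
      AKRel A Q d x xinv n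
        ((FreeAlgebra.ι A i - algebraMap A (FreeAlgebra A ℕ) x) *
          (FreeAlgebra.ι A i + algebraMap A (FreeAlgebra A ℕ) xinv)) 0
  | cyc (h : 0 < n) :
      AKRel A Q d x xinv n
        (((List.range d).map
          (fun b => FreeAlgebra.ι A 0 - algebraMap A (FreeAlgebra A ℕ) (Q b))).prod) 0
  | kill (i : ℕ) (h : ¬ i < n) : AKRel A Q d x xinv n (FreeAlgebra.ι A i) 0

/-- The Ariki–Koike algebra `H_n^{Q,x}`. -/
abbrev ArikiKoike (A : Type) [CommRing A] (Q : ℕ → A) (d : ℕ) (x xinv : A) (n : ℕ) :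
    Type := RingQuot (AKRel A Q d x xinv n)


variable {A : Type} [CommRing A] {u v : A} {n : ℕ}

lemma uL_mul_uLi : uL * uLi = 1 := by
  simp [uL, uLi, AddMonoidAlgebra.of'_apply, AddMonoidAlgebra.single_mul_single,
    AddMonoidAlgebra.one_def]
  rfl

lemma vL_mul_vLi : vL * vLi = 1 := by
  simp [vL, vLi, AddMonoidAlgebra.of'_apply, AddMonoidAlgebra.single_mul_single,
    AddMonoidAlgebra.one_def]
  rfl

lemma HT_comm {i j : ℕ} (hij : i + 1 < j) (hj : j + 1 < n) :
    HT A u v n i * HT A u v n j = HT A u v n j * HT A u v n i := by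
  have := RingQuot.mkAlgHom_rel A (HRel.comm (A := A) (u := u) (v := v) i j hij hj)
  simpa [HT, map_mul] using this

lemma HT_braid {i : ℕ} (h : i + 2 < n) :
    HT A u v n i * HT A u v n (i+1) * HT A u v n i
      = HT A u v n (i+1) * HT A u v n i * HT A u v n (i+1) := by
  have := RingQuot.mkAlgHom_rel A (HRel.braid (A := A) (u := u) (v := v) i h)
  simpa [HT, map_mul] using this

lemma HT_quad {i : ℕ} (h : i + 1 < n) :
    HT A u v n i * HT A u v n i
      = algebraMap A (Hecke A u v n) (u ^ 2) + algebraMap A (Hecke A u v n) v * HT A u v n i := by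
  have := RingQuot.mkAlgHom_rel A (HRel.quad (A := A) (u := u) (v := v) i h)
  simpa [HT, map_mul, map_add, AlgHom.commutes] using this

lemma HT_kill {i : ℕ} (h : ¬ i + 1 < n) : HT A u v n i = (0 : Hecke A u v n) := by
  have := RingQuot.mkAlgHom_rel A (HRel.kill (A := A) (u := u) (v := v) i h)
  simpa [HT] using this

lemma heckeInduction {P : Hecke A u v n → Prop}
    (halg : ∀ c : A, P (algebraMap A (Hecke A u v n) c))
    (hgen : ∀ i, P (HT A u v n i))
    (hadd : ∀ x y, P x → P y → P (x + y))
    (hmul : ∀ x y, P x → P y → P (x * y)) : ∀ x, P x := by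
  intro x
  obtain ⟨y, rfl⟩ := RingQuot.mkAlgHom_surjective A (HRel A u v n) x
  induction y using FreeAlgebra.induction with
  | grade0 c => simpa using halg c
  | grade1 i => exact hgen i
  | add a b ha hb => rw [map_add]; exact hadd _ _ ha hb
  | mul a b ha hb => rw [map_mul]; exact hmul _ _ ha hb

/-- `H_n` for `n ≤ 1` consists of scalars. -/
lemma hecke_scalar (hn : n ≤ 1) (x : Hecke A u v n) :
    ∃ c : A, x = algebraMap A (Hecke A u v n) c := by
  induction x using heckeInduction with
  | halg c => exact ⟨c, rfl⟩
  | hgen i => exact ⟨0, by rw [HT_kill (by omega), map_zero]⟩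
  | hadd x y hx hy =>
    obtain ⟨c, rfl⟩ := hx; obtain ⟨c', rfl⟩ := hy; exact ⟨c + c', by rw [map_add]⟩
  | hmul x y hx hy =>
    obtain ⟨c, rfl⟩ := hx; obtain ⟨c', rfl⟩ := hy; exact ⟨c * c', by rw [map_mul]⟩

/-- Extensionality: algebra maps out of `H_n` agreeing on generators agree. -/
lemma hecke_algHom_ext {B : Type} [Semiring B] [Algebra A B]
    {f g : Hecke A u v n →ₐ[A] B} (h : ∀ i, f (HT A u v n i) = g (HT A u v n i)) :
    f = g := by
  have key : f.comp (RingQuot.mkAlgHom A (HRel A u v n))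
      = g.comp (RingQuot.mkAlgHom A (HRel A u v n)) := by
    apply FreeAlgebra.hom_ext
    funext i
    exact h i
  refine DFunLike.ext _ _ fun x => ?_
  obtain ⟨y, rfl⟩ := RingQuot.mkAlgHom_surjective A (HRel A u v n) x
  exact DFunLike.congr_fun key y


variable (A : Type) [CommRing A] (u v : A)

/-- Block embedding `H_m → H_n` at offset `off` (assuming `off + m ≤ n`). -/
def emb (m n off : ℕ) (h : off + m ≤ n) : Hecke A u v m →ₐ[A] Hecke A u v n := by
  refine RingQuot.liftAlgHom A
    ⟨FreeAlgebra.lift A (fun i => if i + 1 < m then HT A u v n (off + i) else 0), ?_⟩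
  intro a b hab
  induction hab with
  | comm i j hij hj =>
    have hi : i + 1 < m := by omega
    have hj' : j + 1 < m := by omega
    simp only [map_mul, FreeAlgebra.lift_ι_apply, if_pos hi, if_pos hj']
    exact HT_comm (by omega) (by omega)
  | braid i hbr =>
    have hi : i + 1 < m := by omega
    have hi1 : i + 1 + 1 < m := by omega
    simp only [map_mul, FreeAlgebra.lift_ι_apply, if_pos hi, if_pos hi1]
    have := HT_braid (A := A) (u := u) (v := v) (n := n) (i := off + i) (by omega)
    have harith : off + (i + 1) = off + i + 1 := by omega
    rw [harith]
    exact this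
  | quad i hq =>
    have hi : i + 1 < m := by omega
    simp only [map_mul, map_add, FreeAlgebra.lift_ι_apply, if_pos hi, AlgHom.commutes]
    exact HT_quad (by omega)
  | kill i hk =>
    simp only [FreeAlgebra.lift_ι_apply, if_neg hk, map_zero]

lemma emb_HT {m n off : ℕ} (h : off + m ≤ n) (i : ℕ) (hi : i + 1 < m) :
    emb A u v m n off h (HT A u v m i) = HT A u v n (off + i) := by
  rw [emb, HT]
  rw [RingQuot.liftAlgHom_mkAlgHom_apply]
  simp [if_pos hi]

lemma emb_isBlockEmb {m n off : ℕ} (h : off + m ≤ n) :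
    IsBlockEmb A u v m n off (emb A u v m n off h) :=
  fun i hi => emb_HT A u v h i hi

/-- Uniqueness of block embeddings. -/
lemma blockEmb_unique {m n off : ℕ} {f g : Hecke A u v m →ₐ[A] Hecke A u v n}
    (hf : IsBlockEmb A u v m n off f) (hg : IsBlockEmb A u v m n off g) : f = g := by
  apply hecke_algHom_ext
  intro i
  by_cases hi : i + 1 < m
  · rw [hf i hi, hg i hi]
  · rw [HT_kill hi, map_zero, map_zero]

/-- Composition of block embeddings. -/
lemma isBlockEmb_comp {m m' n off off' : ℕ} {g : Hecke A u v m →ₐ[A] Hecke A u v m'}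
    {F : Hecke A u v m' →ₐ[A] Hecke A u v n} (hm : off + m ≤ m')
    (hg : IsBlockEmb A u v m m' off g) (hF : IsBlockEmb A u v m' n off' F) :
    IsBlockEmb A u v m n (off' + off) (F.comp g) := by
  intro i hi
  have : (F.comp g) (HT A u v m i) = F (HT A u v m' (off + i)) := by
    simp [AlgHom.comp_apply, hg i hi]
  rw [this, hF (off + i) (by omega)]
  ring_nf

/-- The Markov parameter `z = v⁻¹(1 - u²)`. -/
def zLL : LL := vLi * (1 - uL ^ 2)

lemma HT_isUnit {n i : ℕ} (hi : i + 1 < n) :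
    (HT LL uL vL n i) * ((uLi ^ 2) • HT LL uL vL n i - (uLi ^ 2 * vL) • 1) = 1 ∧
    ((uLi ^ 2) • HT LL uL vL n i - (uLi ^ 2 * vL) • 1) * (HT LL uL vL n i) = 1 := by
  have hq := HT_quad (A := LL) (u := uL) (v := vL) (n := n) (i := i) hi
  have hu : uL * uLi = 1 := uL_mul_uLi
  constructor
  · rw [mul_sub, mul_smul_comm, hq, mul_smul_comm, mul_one]
    rw [smul_add, Algebra.smul_def, Algebra.smul_def, Algebra.smul_def, ← map_mul]
    have : uLi ^ 2 * uL ^ 2 = 1 := by linear_combination (uLi * uL + 1) * hu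
    rw [this, map_one, ← mul_assoc, ← map_mul]
    exact add_sub_cancel_right 1 _
  · rw [sub_mul, smul_mul_assoc, hq, smul_mul_assoc, one_mul]
    rw [smul_add, Algebra.smul_def, Algebra.smul_def, Algebra.smul_def, ← map_mul]
    have : uLi ^ 2 * uL ^ 2 = 1 := by linear_combination (uLi * uL + 1) * hu
    rw [this, map_one, ← mul_assoc, ← map_mul]
    exact add_sub_cancel_right 1 _

lemma ringInverse_HT {n i : ℕ} (hi : i + 1 < n) :
    Ring.inverse (HT LL uL vL n i)
      = (uLi ^ 2) • HT LL uL vL n i - (uLi ^ 2 * vL) • 1 := by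
  obtain ⟨h1, h2⟩ := HT_isUnit hi
  have : Ring.inverse (HT LL uL vL n i)
      = Ring.inverse ((⟨HT LL uL vL n i, _, h1, h2⟩ : (Hecke LL uL vL n)ˣ) : Hecke LL uL vL n) :=
    rfl
  rw [this, Ring.inverse_unit]; rfl

/-- Stabilisation: `τ_{n+2}(f x) = z · τ_{n+1}(x)` for a block embedding `f`. -/
lemma stab {τ : ∀ m, Hecke LL uL vL m →ₗ[LL] LL} (hτ : IsMarkovH LL uL vL τ)
    {n : ℕ} {f : Hecke LL uL vL (n + 1) →ₐ[LL] Hecke LL uL vL (n + 2)}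
    (hf : ∀ i, i + 1 < n + 1 → f (HT LL uL vL (n + 1) i) = HT LL uL vL (n + 2) i)
    (x : Hecke LL uL vL (n + 1)) :
    τ (n + 2) (f x) = zLL * τ (n + 1) x := by
  obtain ⟨h1, h2⟩ := hτ.2 n f hf x
  rw [ringInverse_HT (by omega)] at h2
  rw [mul_sub, mul_smul_comm, mul_smul_comm, mul_one, map_sub, map_smul, map_smul,
    smul_eq_mul, smul_eq_mul, h1] at h2
  have hu : uL * uLi = 1 := uL_mul_uLi
  have hv : vL * vLi = 1 := vL_mul_vLi
  rw [zLL]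
  linear_combination (-(uL ^ 2 * vLi)) * h2
    + (vLi * τ (n + 1) x * (uL * uLi + 1) - τ (n + 2) (f x) * vL * vLi * (uL * uLi + 1)) * hu
    + (- τ (n + 2) (f x)) * hv

/-- Elements of the image of `emb m n 0` commute with `T_j` for `j ≥ m`. -/
lemma emb_comm_HT {m n j : ℕ} (h : 0 + m ≤ n) (hmj : m ≤ j) (hj : j + 1 < n)
    (c : Hecke A u v m) :
    emb A u v m n 0 h c * HT A u v n j = HT A u v n j * emb A u v m n 0 h c := by
  induction c using heckeInduction with
  | halg c =>
    rw [(emb A u v m n 0 h).commutes c]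
    exact Algebra.commutes c (HT A u v n j)
  | hgen i =>
    by_cases hi : i + 1 < m
    · rw [emb_HT A u v h i hi, zero_add]
      have hij : i + 1 < j := lt_of_lt_of_le hi hmj
      exact HT_comm hij hj
    · rw [HT_kill hi, map_zero, zero_mul, mul_zero]
  | hadd x y hx hy => rw [map_add, add_mul, mul_add, hx, hy]
  | hmul x y hx hy =>
    rw [map_mul, mul_assoc, hy, ← mul_assoc, hx, mul_assoc]

/-- The canonical embedding `H_p → H_{p+1}`. -/
def incl (p : ℕ) : Hecke A u v p →ₐ[A] Hecke A u v (p + 1) :=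
  emb A u v p (p + 1) 0 (by omega)

lemma incl_isBlockEmb (p : ℕ) : IsBlockEmb A u v p (p + 1) 0 (incl A u v p) :=
  emb_isBlockEmb A u v _

lemma incl_HT {p i : ℕ} (hi : i + 1 < p) :
    incl A u v p (HT A u v p i) = HT A u v (p + 1) i := by
  rw [incl, emb_HT A u v _ i hi, zero_add]

/-- The spanning set `H_p ∪ H_p T_{p-1} H_p` of `H_{p+1}`. -/
def spanSet (p : ℕ) : Set (Hecke A u v (p + 1)) :=
  {y | (∃ a, y = incl A u v p a) ∨
    ∃ a b, y = incl A u v p a * HT A u v (p + 1) (p - 1) * incl A u v p b}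

lemma one_mem_spanSet (p : ℕ) : (1 : Hecke A u v (p + 1)) ∈ spanSet A u v p :=
  Or.inl ⟨1, (map_one _).symm⟩

/-- Key spanning lemma: `H_{p+1}` is spanned by `H_p ∪ H_p T_{p-1} H_p`. -/
lemma spanning : ∀ (p : ℕ) (y : Hecke A u v (p + 1)),
    y ∈ Submodule.span A (spanSet A u v p) := by
  intro p
  induction p with
  | zero =>
    intro y
    obtain ⟨c, rfl⟩ := hecke_scalar (by omega) y
    have : (algebraMap A (Hecke A u v 1) c) = incl A u v 0 (algebraMap A (Hecke A u v 0) c) := by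
      rw [AlgHom.commutes]
    exact Submodule.subset_span (Or.inl ⟨_, this⟩)
  | succ q IH =>
    -- now p = q + 1, working in `H_{q+2}` with `T := T_q`.
    set T : Hecke A u v (q + 2) := HT A u v (q + 2) q with hT
    set inc := incl A u v (q + 1) with hinc
    set M := Submodule.span A (spanSet A u v (q + 1)) with hM
    -- membership of the basic generators
    have memI : ∀ a : Hecke A u v (q + 1), inc a ∈ M :=
      fun a => Submodule.subset_span (Or.inl ⟨a, rfl⟩)
    have memII : ∀ a b : Hecke A u v (q + 1), inc a * T * inc b ∈ M := by
      intro a b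
      refine Submodule.subset_span (Or.inr ⟨a, b, ?_⟩)
      rfl
    -- commuting elements of (the double embedding of) `H_q` past `T`
    have embDouble_eq : ∀ c : Hecke A u v q,
        inc (incl A u v q c) = emb A u v q (q + 2) 0 (by omega) c := by
      intro c
      have : (incl A u v (q + 1)).comp (incl A u v q) = emb A u v q (q + 2) 0 (by omega) := by
        apply blockEmb_unique A u v (off := 0)
        · exact isBlockEmb_comp A u v (by omega) (incl_isBlockEmb A u v q)
            (incl_isBlockEmb A u v (q + 1))
        · exact emb_isBlockEmb A u v _
      exact DFunLike.congr_fun this c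
    have commD : ∀ c : Hecke A u v q,
        inc (incl A u v q c) * T = T * inc (incl A u v q c) := by
      intro c
      rw [embDouble_eq c]
      exact emb_comm_HT A u v _ (by omega) (by omega) c
    -- the quadratic relation
    have hquad : T * T = algebraMap A _ (u ^ 2) + algebraMap A _ v * T :=
      HT_quad (by omega)
    -- key closure computation: `s * T ∈ M` for `s` a spanning element of the second kind
    have keyII : ∀ a b : Hecke A u v (q + 1), inc a * T * inc b * T ∈ M := by
      intro a b
      have hb := IH b
      induction hb using Submodule.span_induction with
      | mem y hy =>
        rcases hy with ⟨c, rfl⟩ | ⟨c, c', rfl⟩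
        · -- y = incl q c commutes with T
          have : inc a * T * inc (incl A u v q c) * T
              = inc (a * incl A u v q c) * (T * T) := by
            rw [map_mul]
            calc inc a * T * inc (incl A u v q c) * T
                = inc a * (T * inc (incl A u v q c)) * T := by rw [mul_assoc (inc a)]
              _ = inc a * (inc (incl A u v q c) * T) * T := by rw [commD]
              _ = inc a * inc (incl A u v q c) * (T * T) := by
                  rw [← mul_assoc, mul_assoc]
          rw [this, hquad, mul_add]
          refine add_mem ?_ ?_
          · rw [← Algebra.commutes (u ^ 2), ← Algebra.smul_def]
            exact Submodule.smul_mem _ _ (memI _)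
          · rw [show inc (a * incl A u v q c) * (algebraMap A _ v * T)
                = v • (inc (a * incl A u v q c) * T * inc 1) by
              rw [map_one, mul_one, Algebra.smul_def, ← mul_assoc,
                ← Algebra.commutes v, mul_assoc]]
            exact Submodule.smul_mem _ _ (memII _ _)
        · -- y = incl q c * T' * incl q c'
          by_cases hq : q = 0
          · subst hq
            have : HT A u v 1 (0 - 1) = 0 := HT_kill (by omega)
            rw [this, mul_zero, zero_mul, map_zero, mul_zero, zero_mul]
            exact Submodule.zero_mem _
          · -- q ≥ 1 : T'' = HT (q+2) (q-1)
            have hq1 : q - 1 + 1 = q := by omega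
            set T'' : Hecke A u v (q + 2) := HT A u v (q + 2) (q - 1) with hT''
            have hincT' : inc (HT A u v (q + 1) (q - 1)) = T'' := by
              rw [hinc, incl_HT A u v (by omega)]
            have hbraid : T * T'' * T = T'' * T * T'' := by
              have hbb := HT_braid (A := A) (u := u) (v := v) (n := q + 2) (i := q - 1)
                (by omega)
              rw [hq1] at hbb
              rw [hT, hT'']
              exact hbb.symm
            have h1 := commD c
            have h2 := commD c'
            have key : inc a * T * inc (incl A u v q c * HT A u v (q + 1) (q - 1)
                  * incl A u v q c') * T
                = inc (a * incl A u v q c * HT A u v (q + 1) (q - 1)) * T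
                  * inc (HT A u v (q + 1) (q - 1) * incl A u v q c') := by
              simp only [map_mul]
              rw [hincT']
              calc inc a * T * (inc (incl A u v q c) * T'' * inc (incl A u v q c')) * T
                  = inc a * (T * inc (incl A u v q c))
                      * (T'' * (inc (incl A u v q c') * T)) := by
                    simp only [mul_assoc]
                _ = inc a * (inc (incl A u v q c) * T)
                      * (T'' * (T * inc (incl A u v q c'))) := by
                    rw [← h1, h2]
                _ = inc a * inc (incl A u v q c) * (T * T'' * T)
                      * inc (incl A u v q c') := by
                    simp only [mul_assoc]
                _ = inc a * inc (incl A u v q c) * (T'' * T * T'')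
                      * inc (incl A u v q c') := by rw [hbraid]
                _ = inc a * inc (incl A u v q c) * T'' * T
                      * (T'' * inc (incl A u v q c')) := by
                    simp only [mul_assoc]
            rw [key]
            exact memII _ _
      | zero =>
        rw [map_zero, mul_zero, zero_mul]
        exact Submodule.zero_mem _
      | add y z _ _ hy hz =>
        rw [map_add, mul_add, add_mul]
        exact add_mem hy hz
      | smul r y _ hy =>
        rw [map_smul, mul_smul_comm, smul_mul_assoc]
        exact Submodule.smul_mem _ _ hy
    -- closure of the spanning set under right multiplication by generators
    have mulGen : ∀ s ∈ spanSet A u v (q + 1), ∀ i, s * HT A u v (q + 2) i ∈ M := by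
      intro s hs i
      by_cases hi2 : i + 1 < q + 2
      · by_cases hi1 : i + 1 < q + 1
        · rcases hs with ⟨a, rfl⟩ | ⟨a, b, rfl⟩
          · rw [← incl_HT A u v hi1, ← map_mul]
            exact memI _
          · rw [show (q + 1 : ℕ) - 1 = q from rfl, ← hT, ← hinc, mul_assoc,
              ← incl_HT A u v hi1, ← map_mul]
            exact memII _ _
        · rw [show i = q from by omega]
          rcases hs with ⟨a, rfl⟩ | ⟨a, b, rfl⟩
          · rw [show inc a * HT A u v (q + 2) q = inc a * T * inc 1 by
              rw [map_one, mul_one, hT]]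
            exact memII _ _
          · rw [show (q + 1 : ℕ) - 1 = q from rfl, ← hT, ← hinc]
            exact keyII a b
      · rw [HT_kill hi2, mul_zero]
        exact Submodule.zero_mem _
    -- closure of M under right multiplication by arbitrary elements
    have mulMem : ∀ x : Hecke A u v (q + 2), ∀ w ∈ M, w * x ∈ M := by
      intro x
      induction x using heckeInduction with
      | halg c =>
        intro w hw
        rw [← Algebra.commutes c, ← Algebra.smul_def]
        exact Submodule.smul_mem _ _ hw
      | hgen i =>
        intro w hw
        induction hw using Submodule.span_induction with
        | mem y hy => exact mulGen y hy i
        | zero => rw [zero_mul]; exact Submodule.zero_mem _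
        | add y z _ _ hy hz => rw [add_mul]; exact add_mem hy hz
        | smul r y _ hy => rw [smul_mul_assoc]; exact Submodule.smul_mem _ _ hy
      | hadd y z hy hz =>
        intro w hw
        rw [mul_add]
        exact add_mem (hy w hw) (hz w hw)
      | hmul y z hy hz =>
        intro w hw
        rw [← mul_assoc]
        exact hz _ (hy w hw)
    intro y
    have h1 : (1 : Hecke A u v (q + 2)) ∈ M :=
      Submodule.subset_span (one_mem_spanSet A u v (q + 1))
    simpa using mulMem y 1 h1

/-- Normalisation: `τ_m(c·1) = c` for `m ≤ 1`. -/
lemma tau_scalar {τ : ∀ m, Hecke LL uL vL m →ₗ[LL] LL} (hτ : IsNormMarkovH LL uL vL τ)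
    {m : ℕ} (hm : m ≤ 1) (c : LL) : τ m (algebraMap LL (Hecke LL uL vL m) c) = c := by
  interval_cases m
  · exact hτ.2.2 c
  · have : algebraMap LL (Hecke LL uL vL 1) c = c • 1 := (Algebra.algebraMap_eq_smul_one c)
    rw [this, map_smul, hτ.2.1, smul_eq_mul, mul_one]

lemma incl_markov_hyp (p : ℕ) :
    ∀ i, i + 1 < p + 1 → incl LL uL vL (p + 1) (HT LL uL vL (p + 1) i)
      = HT LL uL vL (p + 2) i := by
  intro i hi
  have := incl_isBlockEmb LL uL vL (p + 1) i hi
  rwa [Nat.zero_add i] at this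

/-- Stabilisation in the convenient form `τ_{p+2}(incl y) = z τ_{p+1} y`. -/
lemma tau_incl {τ : ∀ m, Hecke LL uL vL m →ₗ[LL] LL} (hτ : IsNormMarkovH LL uL vL τ)
    (p : ℕ) (y : Hecke LL uL vL (p + 1)) :
    τ (p + 2) (incl LL uL vL (p + 1) y) = zLL * τ (p + 1) y :=
  stab hτ.1 (incl_markov_hyp p) y

/-- The two-block factorisation lemma. -/
lemma twoBlock {τ : ∀ m, Hecke LL uL vL m →ₗ[LL] LL} (hτ : IsNormMarkovH LL uL vL τ) :
    ∀ (k m : ℕ), 1 ≤ m →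
    ∀ (F : Hecke LL uL vL m →ₐ[LL] Hecke LL uL vL (m + (k + 1)))
      (G : Hecke LL uL vL (k + 1) →ₐ[LL] Hecke LL uL vL (m + (k + 1))),
      IsBlockEmb LL uL vL m (m + (k + 1)) 0 F →
      IsBlockEmb LL uL vL (k + 1) (m + (k + 1)) m G →
      ∀ (x : Hecke LL uL vL m) (y : Hecke LL uL vL (k + 1)),
      τ (m + (k + 1)) (F x * G y) = zLL * τ m x * τ (k + 1) y := by
  intro k
  induction k with
  | zero =>
    intro m hm F G hF hG x y
    obtain ⟨n0, rfl⟩ : ∃ n0, m = n0 + 1 := ⟨m - 1, by omega⟩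
    obtain ⟨c, rfl⟩ := hecke_scalar (le_refl 1) y
    rw [AlgHom.commutes, show F x * algebraMap LL _ c = c • F x by
      rw [Algebra.smul_def, ← Algebra.commutes c (F x)], map_smul, smul_eq_mul]
    have hFx : τ (n0 + 1 + 1) (F x) = zLL * τ (n0 + 1) x := by
      refine stab hτ.1 (fun i hi => ?_) x
      have := hF i hi
      rwa [Nat.zero_add i] at this
    rw [hFx, tau_scalar hτ (by omega) c]
    ring
  | succ k IH =>
    intro m hm F G hF hG x y
    show τ (m + k + 2) (F x * G y) = zLL * τ m x * τ (k + 2) y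
    have tr := hτ.1.1
    set T : Hecke LL uL vL (k + 2) := HT LL uL vL (k + 2) k with hTdef
    set incBig := incl LL uL vL (m + k + 1) with hincBig
    set F' := emb LL uL vL m (m + k + 1) 0 (by omega) with hF'
    set G' := emb LL uL vL (k + 1) (m + k + 1) m (by omega) with hG'
    have hincBigHyp : ∀ i, i + 1 < m + k + 1 →
        incBig (HT LL uL vL (m + k + 1) i) = HT LL uL vL (m + k + 2) i :=
      incl_markov_hyp (m + k)
    have hFdec : ∀ w, F w = incBig (F' w) := by
      have h0 : F = incBig.comp F' := by
        refine blockEmb_unique LL uL vL (off := 0) hF (fun i hi => ?_)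
        show incBig (F' (HT LL uL vL m i)) = HT LL uL vL (m + k + 2) (0 + i)
        rw [emb_HT LL uL vL _ i hi, Nat.zero_add i, hincBigHyp i (by omega)]
      intro w; rw [h0]; rfl
    have hGdec : ∀ a, G (incl LL uL vL (k + 1) a) = incBig (G' a) := by
      have ha : IsBlockEmb LL uL vL (k + 1) (m + (k + 2)) m
          (G.comp (incl LL uL vL (k + 1))) := by
        intro i hi
        show G (incl LL uL vL (k + 1) (HT LL uL vL (k + 1) i))
          = HT LL uL vL (m + k + 2) (m + i)
        rw [incl_markov_hyp k i hi]
        exact hG i (by omega)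
      have hb : IsBlockEmb LL uL vL (k + 1) (m + (k + 2)) m (incBig.comp G') := by
        intro i hi
        show incBig (G' (HT LL uL vL (k + 1) i)) = HT LL uL vL (m + k + 2) (m + i)
        rw [emb_HT LL uL vL _ i hi, hincBigHyp (m + i) (by omega)]
      have h0 := blockEmb_unique LL uL vL (off := m) ha hb
      intro a
      have := DFunLike.congr_fun h0 a
      exact this
    have hGT : G T = HT LL uL vL (m + k + 2) (m + k) := hG k (by omega)
    have stabBig : ∀ w, τ (m + k + 2) (incBig w) = zLL * τ (m + k + 1) w :=
      fun w => stab hτ.1 hincBigHyp w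
    have markovBig : ∀ w, τ (m + k + 2) (incBig w * HT LL uL vL (m + k + 2) (m + k))
        = τ (m + k + 1) w :=
      fun w => (hτ.1.2 (m + k) incBig hincBigHyp w).1
    have markovSmall : ∀ w, τ (k + 2) (incl LL uL vL (k + 1) w * T) = τ (k + 1) w :=
      fun w => (hτ.1.2 k (incl LL uL vL (k + 1)) (incl_markov_hyp k) w).1
    have IH' : ∀ (x : Hecke LL uL vL m) (a : Hecke LL uL vL (k + 1)),
        τ (m + k + 1) (F' x * G' a) = zLL * τ m x * τ (k + 1) a :=
      fun x a => IH m hm F' G' (emb_isBlockEmb LL uL vL _) (emb_isBlockEmb LL uL vL _) x a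
    have hspan := spanning LL uL vL (k + 1) y
    induction hspan using Submodule.span_induction with
    | mem y hy =>
      rcases hy with ⟨a, rfl⟩ | ⟨a, b, rfl⟩
      · -- y = incl a
        rw [hGdec, hFdec, ← map_mul incBig (F' x) (G' a), stabBig, IH',
          tau_incl hτ k a]
        ring
      · -- y = incl a * T * incl b
        have hTT : HT LL uL vL (k + 1 + 1) (k + 1 - 1) = T := rfl
        rw [hTT]
        have hGy : G (incl LL uL vL (k + 1) a * T * incl LL uL vL (k + 1) b)
            = incBig (G' a) * HT LL uL vL (m + k + 2) (m + k) * incBig (G' b) := by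
          rw [map_mul G, map_mul G, hGdec, hGdec, hGT]
        rw [hGy, hFdec]
        have e0 : incBig (F' x) * (incBig (G' a) * HT LL uL vL (m + k + 2) (m + k)
              * incBig (G' b))
            = (incBig (F' x * G' a) * HT LL uL vL (m + k + 2) (m + k))
              * incBig (G' b) := by
          rw [map_mul incBig]; simp only [mul_assoc]
        rw [e0, tr]
        have e1 : incBig (G' b) * (incBig (F' x * G' a)
              * HT LL uL vL (m + k + 2) (m + k))
            = incBig (G' b * (F' x * G' a)) * HT LL uL vL (m + k + 2) (m + k) := by
          rw [map_mul incBig (G' b) (F' x * G' a), mul_assoc]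
        rw [e1, markovBig, tr]
        have e2 : F' x * G' a * G' b = F' x * G' (a * b) := by
          rw [map_mul G', mul_assoc]
        rw [e2, IH']
        have e3 : τ (k + 2) (incl LL uL vL (k + 1) a * T * incl LL uL vL (k + 1) b)
            = τ (k + 1) (a * b) := by
          rw [tr, ← mul_assoc, ← map_mul (incl LL uL vL (k + 1)), markovSmall, tr]
        rw [e3]
    | zero => rw [map_zero, mul_zero, map_zero, map_zero, mul_zero]
    | add y z _ _ hy hz =>
      rw [map_add, mul_add, map_add, map_add, mul_add, hy, hz]
    | smul r y _ hy =>
      rw [map_smul, mul_smul_comm, map_smul, map_smul, smul_eq_mul, smul_eq_mul, hy]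
      ring

lemma psumLt_zero {d : ℕ} (μ : Fin (d + 1) → ℕ) : psumLt μ 0 = 0 := by
  rw [psumLt]
  refine Finset.sum_eq_zero fun b hb => ?_
  simp only [Finset.mem_filter] at hb
  exact absurd hb.2 (Fin.not_lt_zero b)

lemma psumLt_succ {d : ℕ} (μ : Fin (d + 1) → ℕ) (a : Fin d) :
    psumLt μ a.succ = μ 0 + psumLt (fun b => μ b.succ) a := by
  rw [psumLt, psumLt, Finset.sum_filter, Finset.sum_filter, Fin.sum_univ_succ]
  congr 1
  · simp [Fin.succ_pos]

lemma psumLe_eq {d : ℕ} (μ : Fin d → ℕ) (a : Fin d) :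
    psumLe μ a = psumLt μ a + μ a := by
  rw [psumLe, psumLt]
  have : (Finset.univ.filter (fun b : Fin d => b ≤ a))
      = insert a (Finset.univ.filter (fun b : Fin d => b < a)) := by
    ext b
    simp [le_iff_lt_or_eq, or_comm, eq_comm]
  rw [this, Finset.sum_insert (by simp)]
  ring

lemma psumLe_le {d : ℕ} (μ : Fin d → ℕ) (a : Fin d) : psumLe μ a ≤ ∑ b, μ b :=
  Finset.sum_le_sum_of_subset (Finset.filter_subset _ _)

lemma card_filter_succ {d : ℕ} (μ : Fin (d + 1) → ℕ) :
    (Finset.univ.filter (fun a : Fin (d + 1) => μ a ≠ 0)).card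
      = (if μ 0 ≠ 0 then 1 else 0)
        + (Finset.univ.filter (fun a : Fin d => μ a.succ ≠ 0)).card := by
  rw [Finset.card_filter, Finset.card_filter, Fin.sum_univ_succ]

/-- The main lemma, by induction on the number of blocks. -/
lemma mainAux {τ : ∀ m, Hecke LL uL vL m →ₗ[LL] LL} (hτ : IsNormMarkovH LL uL vL τ) :
    ∀ (d n : ℕ), 1 ≤ n → ∀ (μ : Fin d → ℕ), (∑ a, μ a) = n →
    ∀ (x : ∀ a : Fin d, Hecke LL uL vL (μ a))
      (f : ∀ a : Fin d, Hecke LL uL vL (μ a) →ₐ[LL] Hecke LL uL vL n),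
      (∀ a, IsBlockEmb LL uL vL (μ a) n (psumLt μ a) (f a)) →
      τ n (((List.finRange d).map (fun a => f a (x a))).prod) =
        zLL ^ ((Finset.univ.filter (fun a : Fin d => μ a ≠ 0)).card - 1) *
          (((List.finRange d).map (fun a => τ (μ a) (x a))).prod) := by
  intro d
  induction d with
  | zero =>
    intro n hn μ hμ
    simp at hμ
    omega
  | succ d IH =>
    intro n hn μ hμ x f hf
    -- split off the first block
    rw [List.finRange_succ, List.map_cons, List.prod_cons, List.map_cons,
      List.prod_cons, List.map_map, List.map_map]
    by_cases h0 : μ 0 = 0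
    · -- empty first block
      obtain ⟨c, hc⟩ := hecke_scalar (show μ 0 ≤ 1 by omega) (x 0)
      have hsum' : (∑ a : Fin d, μ a.succ) = n := by
        rw [Fin.sum_univ_succ, h0, Nat.zero_add] at hμ
        exact hμ
      have hf' : ∀ a : Fin d, IsBlockEmb LL uL vL (μ a.succ) n
          (psumLt (fun b => μ b.succ) a) (f a.succ) := by
        intro a i hi
        have h2 := hf a.succ i hi
        rwa [psumLt_succ, h0, Nat.zero_add] at h2
      have hIH : τ n (((List.finRange d).map (fun a => f a.succ (x a.succ))).prod)
          = zLL ^ ((Finset.univ.filter (fun a : Fin d => μ a.succ ≠ 0)).card - 1) *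
            (((List.finRange d).map (fun a => τ (μ a.succ) (x a.succ))).prod) :=
        IH n hn (fun a => μ a.succ) hsum' (fun a => x a.succ) (fun a => f a.succ) hf'
      rw [hc, AlgHom.commutes,
        show ∀ w : Hecke LL uL vL n, algebraMap LL _ c * w = c • w from
          fun w => (Algebra.smul_def c w).symm,
        map_smul, smul_eq_mul]
      rw [show ((List.finRange d).map ((fun a => f a (x a)) ∘ Fin.succ)).prod
          = ((List.finRange d).map (fun a => f a.succ (x a.succ))).prod from rfl, hIH]
      rw [tau_scalar hτ (by omega) c, card_filter_succ, if_neg (by simpa using h0),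
        Nat.zero_add]
      rw [show ((List.finRange d).map ((fun a => τ (μ a) (x a)) ∘ Fin.succ)).prod
          = ((List.finRange d).map (fun a => τ (μ a.succ) (x a.succ))).prod from rfl]
      ring
    · by_cases hp : (∑ a : Fin d, μ a.succ) = 0
      · -- all the other blocks are empty
        have hz : ∀ a : Fin d, μ a.succ = 0 := by
          intro a
          have := Finset.sum_eq_zero_iff.mp hp a (Finset.mem_univ a)
          exact this
        have hn0 : μ 0 = n := by
          rw [Fin.sum_univ_succ, hp] at hμ
          omega
        subst hn0
        -- f 0 is the identity
        have hid : f 0 = AlgHom.id LL (Hecke LL uL vL (μ 0)) := by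
          refine blockEmb_unique LL uL vL (off := 0) ?_ (fun i hi => ?_)
          · intro i hi
            have h2 := hf 0 i hi
            rwa [psumLt_zero] at h2
          · rw [AlgHom.id_apply, Nat.zero_add]
        -- the other factors are scalars
        have hsc : ∀ a : Fin d, ∃ c, x a.succ = algebraMap LL _ c :=
          fun a => hecke_scalar (by rw [hz a]; omega) (x a.succ)
        choose c hc using hsc
        have hfact : ((List.finRange d).map ((fun a => f a (x a)) ∘ Fin.succ)).prod
            = algebraMap LL (Hecke LL uL vL (μ 0)) (((List.finRange d).map c).prod) := by
          rw [map_list_prod (algebraMap LL (Hecke LL uL vL (μ 0))), List.map_map]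
          congr 1
          refine List.map_congr_left fun a _ => ?_
          show f a.succ (x a.succ) = algebraMap LL _ (c a)
          rw [hc a, AlgHom.commutes]
        have hfact2 : ((List.finRange d).map ((fun a => τ (μ a) (x a)) ∘ Fin.succ)).prod
            = ((List.finRange d).map c).prod := by
          congr 1
          refine List.map_congr_left fun a _ => ?_
          show τ (μ a.succ) (x a.succ) = c a
          rw [hc a, tau_scalar hτ (by rw [hz a]; omega) (c a)]
        rw [hfact, hfact2, hid, AlgHom.id_apply]
        rw [show ∀ w : Hecke LL uL vL (μ 0), w * algebraMap LL _ (((List.finRange d).map c).prod)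
            = (((List.finRange d).map c).prod) • w from
          fun w => by rw [Algebra.smul_def, ← Algebra.commutes], map_smul, smul_eq_mul]
        have hcard : (Finset.univ.filter (fun a : Fin (d + 1) => μ a ≠ 0)).card = 1 := by
          rw [card_filter_succ, if_pos (by simpa using h0)]
          have : (Finset.univ.filter (fun a : Fin d => μ a.succ ≠ 0)) = ∅ := by
            refine Finset.filter_eq_empty_iff.mpr fun a _ => by simp [hz a]
          rw [this, Finset.card_empty]
        rw [hcard]
        ring
      · -- main case : two nonempty groups of blocks
        obtain ⟨k, hk⟩ : ∃ k, (∑ a : Fin d, μ a.succ) = k + 1 := ⟨(∑ a : Fin d, μ a.succ) - 1, by omega⟩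
        have hsplit : n = μ 0 + (k + 1) := by
          rw [← hμ, Fin.sum_univ_succ, hk]
        subst hsplit
        set Sh := emb LL uL vL (k + 1) (μ 0 + (k + 1)) (μ 0) (le_refl _) with hSh
        have hbound : ∀ a : Fin d, psumLt (fun b => μ b.succ) a + μ a.succ ≤ k + 1 := by
          intro a
          have h1 := psumLe_le (fun b => μ b.succ) a
          have h2 := psumLe_eq (fun b => μ b.succ) a
          rw [hk] at h1
          omega
        set f'' := fun a : Fin d => emb LL uL vL (μ a.succ) (k + 1)
          (psumLt (fun b => μ b.succ) a) (hbound a) with hf''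
        have hdec : ∀ (a : Fin d) (w : Hecke LL uL vL (μ a.succ)),
            f a.succ w = Sh (f'' a w) := by
          intro a
          have h1 : f a.succ = Sh.comp (f'' a) := by
            refine blockEmb_unique LL uL vL (off := psumLt μ a.succ) (hf a.succ)
              (fun i hi => ?_)
            show Sh (f'' a (HT LL uL vL (μ a.succ) i)) = _
            rw [hf'', emb_HT LL uL vL _ i hi, hSh,
              emb_HT LL uL vL _ _ (by have := hbound a; omega), psumLt_succ]
            congr 1
            omega
          intro w
          rw [h1]
          rfl
        have hprodd : ((List.finRange d).map ((fun a => f a (x a)) ∘ Fin.succ)).prod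
            = Sh (((List.finRange d).map (fun a => f'' a (x a.succ))).prod) := by
          rw [map_list_prod Sh, List.map_map]
          congr 1
          refine List.map_congr_left fun a _ => ?_
          exact hdec a (x a.succ)
        rw [hprodd]
        have hf0 : IsBlockEmb LL uL vL (μ 0) (μ 0 + (k + 1)) 0 (f 0) := by
          intro i hi
          have h2 := hf 0 i hi
          rwa [psumLt_zero] at h2
        have h2B := twoBlock hτ k (μ 0) (by omega) (f 0) Sh hf0
          (emb_isBlockEmb LL uL vL _) (x 0)
          (((List.finRange d).map (fun a => f'' a (x a.succ))).prod)
        rw [h2B]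
        have hIH : τ (k + 1) (((List.finRange d).map (fun a => f'' a (x a.succ))).prod)
            = zLL ^ ((Finset.univ.filter (fun a : Fin d => μ a.succ ≠ 0)).card - 1) *
              (((List.finRange d).map (fun a => τ (μ a.succ) (x a.succ))).prod) :=
          IH (k + 1) (by omega) (fun a => μ a.succ) hk (fun a => x a.succ)
            f'' (fun a => emb_isBlockEmb LL uL vL _)
        rw [hIH]
        have hk2 : 1 ≤ (Finset.univ.filter (fun a : Fin d => μ a.succ ≠ 0)).card := by
          have hne : (Finset.univ.filter (fun a : Fin d => μ a.succ ≠ 0)).Nonempty := by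
            by_contra hempty
            rw [Finset.not_nonempty_iff_eq_empty, Finset.filter_eq_empty_iff] at hempty
            have : (∑ a : Fin d, μ a.succ) = 0 :=
              Finset.sum_eq_zero fun a _ => by
                have := hempty (Finset.mem_univ a); simpa using this
            omega
          exact Finset.card_pos.mpr hne
        rw [card_filter_succ, if_pos (by simpa using h0)]
        rw [show ((List.finRange d).map ((fun a => τ (μ a) (x a)) ∘ Fin.succ)).prod
            = ((List.finRange d).map (fun a => τ (μ a.succ) (x a.succ))).prod from rfl]
        rw [show (1 + (Finset.univ.filter (fun a : Fin d => μ a.succ ≠ 0)).card - 1)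
            = ((Finset.univ.filter (fun a : Fin d => μ a.succ ≠ 0)).card - 1) + 1 by
          omega, pow_succ]
        ring

/-- Lemma 5.1(ii) of the paper:
`τ_n(x_1 ⊗ ⋯ ⊗ x_d) = (v^{-1}(1-u^2))^{|[μ]|-1} τ_{μ_1}(x_1) ⋯ τ_{μ_d}(x_d)`. -/
theorem statement11 (d : ℕ) [NeZero d]
    (τ : ∀ m, Hecke LL uL vL m →ₗ[LL] LL) (hτ : IsNormMarkovH LL uL vL τ)
    (n : ℕ) (hn : 1 ≤ n) (μ : Fin d → ℕ) (hμ : ∑ a, μ a = n)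
    (x : ∀ a : Fin d, Hecke LL uL vL (μ a))
    (f : ∀ a : Fin d, Hecke LL uL vL (μ a) →ₐ[LL] Hecke LL uL vL n)
    (hf : ∀ a, IsBlockEmb LL uL vL (μ a) n (psumLt μ a) (f a)) :
    τ n (((List.finRange d).map (fun a => f a (x a))).prod) =
      (vLi * (1 - uL ^ 2)) ^
          ((Finset.univ.filter (fun a : Fin d => μ a ≠ 0)).card - 1) *
        (((List.finRange d).map (fun a => τ (μ a) (x a))).prod) :=
  mainAux hτ d n hn μ hμ x f hf
end YH
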